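/- Let ψ : {1,…,ℓ} → (0,∞) be unimodal (there is m with ψ nondecreasing on [1,m] and nonincreasing on [m,ℓ]) and Σ_v ψ(v)² = 1. Then for any 1 ≤ j ≤ ℓ−1, 2 Σ_{s≤j} Σ_{f>j} ψ(s)²ψ(f)² Σ_{s≤v<f} 1/(ψ(v)ψ(v+1)) ≤ ℓ(ℓ−1). -/

import Mathlib

open Finset

/-- Key combinatorial estimate for the Poincaré bound on path graphs: if
`ψ : {1,…,ℓ} → (0,∞)` is unimodal with `Σ_v ψ(v)² = 1`, then for any `1 ≤ j ≤ ℓ−1`,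
`2 Σ_{s≤j} Σ_{f>j} ψ(s)²ψ(f)² Σ_{s≤v<f} 1/(ψ(v)ψ(v+1)) ≤ ℓ(ℓ−1)`. -/
theorem stmt_15 (ℓ : ℕ) (hℓ : 1 ≤ ℓ) (ψ : ℕ → ℝ)
    (hpos : ∀ v ∈ Icc 1 ℓ, 0 < ψ v)
    (hunimodal : ∃ m ∈ Icc 1 ℓ,
      (∀ i ∈ Icc 1 ℓ, ∀ j ∈ Icc 1 ℓ, i ≤ j → j ≤ m → ψ i ≤ ψ j) ∧
      (∀ i ∈ Icc 1 ℓ, ∀ j ∈ Icc 1 ℓ, m ≤ i → i ≤ j → ψ j ≤ ψ i))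
    (hnorm : ∑ v ∈ Icc 1 ℓ, ψ v ^ 2 = 1)
    (j : ℕ) (hj1 : 1 ≤ j) (hj2 : j ≤ ℓ - 1) :
    2 * ∑ s ∈ Icc 1 j, ∑ f ∈ Icc (j + 1) ℓ,
        ψ s ^ 2 * ψ f ^ 2 * ∑ v ∈ Ico s f, 1 / (ψ v * ψ (v + 1))
      ≤ (ℓ : ℝ) * ((ℓ : ℝ) - 1) := by
  obtain ⟨m, hmI, hup, hdown⟩ := hunimodal
  have hjl : j + 1 ≤ ℓ := by omega
  set K : ℝ := (ℓ : ℝ) * ((ℓ : ℝ) - 1) / 2 with hKdef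
  have hℓR : (1 : ℝ) ≤ (ℓ : ℝ) := by exact_mod_cast hℓ
  have hK0 : (0 : ℝ) ≤ K := by rw [hKdef]; nlinarith
  -- Gauss sums
  have g1 : ∑ f ∈ Icc 1 ℓ, ((f : ℝ) - 1) = K := by
    rw [← Finset.Ico_add_one_right_eq_Icc, Finset.sum_Ico_eq_sum_range,
      show ℓ + 1 - 1 = ℓ from rfl]
    have : ∀ i ∈ range ℓ, ((1 + i : ℕ) : ℝ) - 1 = (i : ℝ) := by
      intro i _; push_cast; ring
    rw [Finset.sum_congr rfl this]
    have h := Finset.sum_range_id_mul_two ℓ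
    have hcast : (∑ i ∈ range ℓ, (i : ℝ)) * 2 = (ℓ : ℝ) * ((ℓ : ℝ) - 1) := by
      have h2 := congrArg (Nat.cast (R := ℝ)) h
      push_cast [Nat.cast_sub hℓ] at h2
      linarith
    rw [hKdef]
    linarith
  have g2 : ∑ s ∈ Icc 1 ℓ, ((ℓ : ℝ) - s) = K := by
    have hsplit : ∀ s : ℕ, ((ℓ : ℝ) - s) = ((ℓ : ℝ) - 1) - ((s : ℝ) - 1) := by
      intro s; ring
    rw [Finset.sum_congr rfl fun s _ => hsplit s, Finset.sum_sub_distrib, g1,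
      Finset.sum_const, Nat.card_Icc, nsmul_eq_mul]
    have : ((ℓ + 1 - 1 : ℕ) : ℝ) = (ℓ : ℝ) := by push_cast; ring
    rw [this, hKdef]
    ring
  -- key per-pair bound
  have key : ∀ s ∈ Icc 1 j, ∀ f ∈ Icc (j + 1) ℓ,
      ψ s ^ 2 * ψ f ^ 2 * ∑ v ∈ Ico s f, 1 / (ψ v * ψ (v + 1))
        ≤ ((f : ℝ) - s) * (if ψ f ≤ ψ s then ψ s ^ 2 else ψ f ^ 2) := by
    intro s hs f hf
    simp only [mem_Icc] at hs hf
    have hmI' := mem_Icc.mp hmI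
    have hsI : s ∈ Icc 1 ℓ := mem_Icc.mpr ⟨hs.1, by omega⟩
    have hfI : f ∈ Icc 1 ℓ := mem_Icc.mpr ⟨by omega, hf.2⟩
    have hψs := hpos s hsI
    have hψf := hpos f hfI
    have hsf : s < f := by omega
    have hminpos : 0 < min (ψ s) (ψ f) := lt_min hψs hψf
    have hmin : ∀ v ∈ Ico s f, min (ψ s) (ψ f) ≤ ψ v ∧ min (ψ s) (ψ f) ≤ ψ (v + 1) := by
      intro v hv
      simp only [mem_Ico] at hv
      have hvI : v ∈ Icc 1 ℓ := mem_Icc.mpr ⟨by omega, by omega⟩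
      have hv1I : v + 1 ∈ Icc 1 ℓ := mem_Icc.mpr ⟨by omega, by omega⟩
      constructor
      · rcases le_total v m with h | h
        · exact le_trans (min_le_left _ _) (hup s hsI v hvI hv.1 h)
        · exact le_trans (min_le_right _ _) (hdown v hvI f hfI h (by omega))
      · rcases le_total (v + 1) m with h | h
        · exact le_trans (min_le_left _ _) (hup s hsI (v + 1) hv1I (by omega) h)
        · exact le_trans (min_le_right _ _) (hdown (v + 1) hv1I f hfI h (by omega))
    have hmax : (if ψ f ≤ ψ s then ψ s ^ 2 else ψ f ^ 2) = max (ψ s) (ψ f) ^ 2 := by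
      rcases le_or_gt (ψ f) (ψ s) with h | h
      · rw [if_pos h, max_eq_left h]
      · rw [if_neg (not_le.mpr h), max_eq_right h.le]
    rw [hmax, Finset.mul_sum]
    have hcard : ((f : ℝ) - s) * max (ψ s) (ψ f) ^ 2
        = ∑ _v ∈ Ico s f, max (ψ s) (ψ f) ^ 2 := by
      rw [Finset.sum_const, Nat.card_Ico, nsmul_eq_mul]
      congr 1
      push_cast [Nat.cast_sub hsf.le]
      ring
    rw [hcard]
    apply Finset.sum_le_sum
    intro v hv
    obtain ⟨h1, h2⟩ := hmin v hv
    have hv0 : 0 < ψ v := lt_of_lt_of_le hminpos h1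
    have hv10 : 0 < ψ (v + 1) := lt_of_lt_of_le hminpos h2
    rw [mul_one_div, div_le_iff₀ (by positivity)]
    have hprod : ψ s ^ 2 * ψ f ^ 2 = min (ψ s) (ψ f) ^ 2 * max (ψ s) (ψ f) ^ 2 := by
      rw [← mul_pow, ← mul_pow, min_mul_max]
    rw [hprod]
    have hmm : min (ψ s) (ψ f) ^ 2 ≤ ψ v * ψ (v + 1) := by nlinarith
    nlinarith [sq_nonneg (max (ψ s) (ψ f))]
  -- step 1: bound double sum termwise
  have step1 : ∑ s ∈ Icc 1 j, ∑ f ∈ Icc (j + 1) ℓ,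
      ψ s ^ 2 * ψ f ^ 2 * ∑ v ∈ Ico s f, 1 / (ψ v * ψ (v + 1))
      ≤ ∑ s ∈ Icc 1 j, ∑ f ∈ Icc (j + 1) ℓ,
        ((f : ℝ) - s) * (if ψ f ≤ ψ s then ψ s ^ 2 else ψ f ^ 2) :=
    Finset.sum_le_sum fun s hs => Finset.sum_le_sum fun f hf => key s hs f hf
  -- split the max into two parts
  have split : ∑ s ∈ Icc 1 j, ∑ f ∈ Icc (j + 1) ℓ,
      ((f : ℝ) - s) * (if ψ f ≤ ψ s then ψ s ^ 2 else ψ f ^ 2)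
      = (∑ s ∈ Icc 1 j, ∑ f ∈ Icc (j + 1) ℓ,
          (if ψ f ≤ ψ s then ((f : ℝ) - s) * ψ s ^ 2 else 0))
        + ∑ s ∈ Icc 1 j, ∑ f ∈ Icc (j + 1) ℓ,
          (if ψ f ≤ ψ s then 0 else ((f : ℝ) - s) * ψ f ^ 2) := by
    rw [← Finset.sum_add_distrib]
    apply Finset.sum_congr rfl
    intro s _
    rw [← Finset.sum_add_distrib]
    apply Finset.sum_congr rfl
    intro f _
    split <;> ring
  -- bound part A
  have partA : ∑ s ∈ Icc 1 j, ∑ f ∈ Icc (j + 1) ℓ,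
      (if ψ f ≤ ψ s then ((f : ℝ) - s) * ψ s ^ 2 else 0)
      ≤ (∑ s ∈ Icc 1 j, ψ s ^ 2) * K := by
    rw [Finset.sum_mul]
    apply Finset.sum_le_sum
    intro s hs
    simp only [mem_Icc] at hs
    have hinner : ∑ f ∈ Icc (j + 1) ℓ, (if ψ f ≤ ψ s then ((f : ℝ) - s) * ψ s ^ 2 else 0)
        ≤ ∑ f ∈ Icc (j + 1) ℓ, ((f : ℝ) - 1) * ψ s ^ 2 := by
      apply Finset.sum_le_sum
      intro f hf
      simp only [mem_Icc] at hf
      have hf1 : (1 : ℝ) ≤ (f : ℝ) := by exact_mod_cast (by omega : 1 ≤ f)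
      have hsf : (s : ℝ) ≥ 1 := by exact_mod_cast hs.1
      split
      · apply mul_le_mul_of_nonneg_right (by linarith) (sq_nonneg _)
      · exact mul_nonneg (by linarith) (sq_nonneg _)
    calc _ ≤ ∑ f ∈ Icc (j + 1) ℓ, ((f : ℝ) - 1) * ψ s ^ 2 := hinner
      _ = (∑ f ∈ Icc (j + 1) ℓ, ((f : ℝ) - 1)) * ψ s ^ 2 := by rw [Finset.sum_mul]
      _ ≤ K * ψ s ^ 2 := by
          apply mul_le_mul_of_nonneg_right _ (sq_nonneg _)
          rw [← g1]
          apply Finset.sum_le_sum_of_subset_of_nonneg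
          · apply Finset.Icc_subset_Icc_left; omega
          · intro f hf _
            simp only [mem_Icc] at hf
            have : (1 : ℝ) ≤ (f : ℝ) := by exact_mod_cast hf.1
            linarith
      _ = ψ s ^ 2 * K := by ring
  -- bound part B
  have partB : ∑ s ∈ Icc 1 j, ∑ f ∈ Icc (j + 1) ℓ,
      (if ψ f ≤ ψ s then 0 else ((f : ℝ) - s) * ψ f ^ 2)
      ≤ (∑ f ∈ Icc (j + 1) ℓ, ψ f ^ 2) * K := by
    rw [Finset.sum_comm, Finset.sum_mul]
    apply Finset.sum_le_sum
    intro f hf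
    simp only [mem_Icc] at hf
    have hfl : (f : ℝ) ≤ (ℓ : ℝ) := by exact_mod_cast hf.2
    have hinner : ∑ s ∈ Icc 1 j, (if ψ f ≤ ψ s then 0 else ((f : ℝ) - s) * ψ f ^ 2)
        ≤ ∑ s ∈ Icc 1 j, ((ℓ : ℝ) - s) * ψ f ^ 2 := by
      apply Finset.sum_le_sum
      intro s hs
      simp only [mem_Icc] at hs
      have hsl : (s : ℝ) ≤ (ℓ : ℝ) := by exact_mod_cast (by omega : s ≤ ℓ)
      split
      · exact mul_nonneg (by linarith) (sq_nonneg _)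
      · apply mul_le_mul_of_nonneg_right (by linarith) (sq_nonneg _)
    calc _ ≤ ∑ s ∈ Icc 1 j, ((ℓ : ℝ) - s) * ψ f ^ 2 := hinner
      _ = (∑ s ∈ Icc 1 j, ((ℓ : ℝ) - s)) * ψ f ^ 2 := by rw [Finset.sum_mul]
      _ ≤ K * ψ f ^ 2 := by
          apply mul_le_mul_of_nonneg_right _ (sq_nonneg _)
          rw [← g2]
          apply Finset.sum_le_sum_of_subset_of_nonneg
          · apply Finset.Icc_subset_Icc_right; omega
          · intro s hs _
            simp only [mem_Icc] at hs
            have : (s : ℝ) ≤ (ℓ : ℝ) := by exact_mod_cast hs.2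
            linarith
      _ = ψ f ^ 2 * K := by ring
  -- partition of the norm
  have hpart : (∑ s ∈ Icc 1 j, ψ s ^ 2) + ∑ f ∈ Icc (j + 1) ℓ, ψ f ^ 2 = 1 := by
    rw [show Icc 1 j = Ioc 0 j from by rw [← Finset.Icc_add_one_left_eq_Ioc, zero_add],
        show Icc (j + 1) ℓ = Ioc j ℓ from by rw [← Finset.Icc_add_one_left_eq_Ioc],
        Finset.sum_Ioc_consecutive _ (by omega : 0 ≤ j) (by omega : j ≤ ℓ),
        show Ioc 0 ℓ = Icc 1 ℓ from by rw [← Finset.Icc_add_one_left_eq_Ioc, zero_add], hnorm]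
  have hfinal : ∑ s ∈ Icc 1 j, ∑ f ∈ Icc (j + 1) ℓ,
      ψ s ^ 2 * ψ f ^ 2 * ∑ v ∈ Ico s f, 1 / (ψ v * ψ (v + 1)) ≤ K := by
    calc _ ≤ _ := step1
      _ = _ := split
      _ ≤ (∑ s ∈ Icc 1 j, ψ s ^ 2) * K + (∑ f ∈ Icc (j + 1) ℓ, ψ f ^ 2) * K :=
          add_le_add partA partB
      _ = ((∑ s ∈ Icc 1 j, ψ s ^ 2) + ∑ f ∈ Icc (j + 1) ℓ, ψ f ^ 2) * K := by ring
      _ = K := by rw [hpart, one_mul]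
  rw [hKdef] at hfinal
  linarith
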